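/- Let a < b be real numbers, let c_1, …, c_K : [a,b] → ℝ^n be integrable functions, let α = (α_1, …, α_K) be a vector of nonnegative reals with α_1 + ⋯ + α_K = 1, and let ε > 0. Then there exists a measurable function g : [a,b] → ℝ^n with g(t) ∈ {c_1(t), …, c_K(t)} for almost every t ∈ [a,b], such that for every t ∈ [a,b], ‖∫_a^t (g(τ) − Σ_{k=1}^K α_k c_k(τ)) dτ‖ < ε. -/

import Mathlib

open MeasureTheory Set

lemma chat_exists_step (s : ℕ → ℝ) (r : ℝ) :
    ∀ K : ℕ, s 0 ≤ r → r < s K → ∃ j, j < K ∧ s j ≤ r ∧ r < s (j + 1) := by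
  intro K
  induction K with
  | zero => intro h1 h2; exact absurd (h1.trans_lt h2) (lt_irrefl _)
  | succ m ih =>
    intro h1 h2
    by_cases hc : s m ≤ r
    · exact ⟨m, m.lt_succ_self, hc, h2⟩
    · push_neg at hc
      obtain ⟨j, hj, h3, h4⟩ := ih h1 hc
      exact ⟨j, hj.trans m.lt_succ_self, h3, h4⟩

lemma chat_uniq {s : ℕ → ℝ} (hs : Monotone s) {r : ℝ} {j j' : ℕ}
    (h1 : s j ≤ r) (h2 : r < s (j + 1)) (h3 : s j' ≤ r) (h4 : r < s (j' + 1)) : j = j' := by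
  by_contra hne
  rcases Nat.lt_or_ge j j' with h | h
  · have : s (j + 1) ≤ s j' := hs h
    linarith
  · have hlt : j' < j := lt_of_le_of_ne h (Ne.symm hne)
    have : s (j' + 1) ≤ s j := hs hlt
    linarith

noncomputable def chatIdx (K : ℕ) (hK : 0 < K) (s : ℕ → ℝ) (r : ℝ) : Fin K :=
  if h : ∃ j, j < K ∧ s j ≤ r ∧ r < s (j + 1) then ⟨Nat.find h, (Nat.find_spec h).1⟩
  else ⟨0, hK⟩

lemma chatIdx_eq {K : ℕ} (hK : 0 < K) {s : ℕ → ℝ} (hs : Monotone s) {r : ℝ} {j : ℕ}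
    (hj : j < K) (h1 : s j ≤ r) (h2 : r < s (j + 1)) :
    chatIdx K hK s r = ⟨j, hj⟩ := by
  have h : ∃ j, j < K ∧ s j ≤ r ∧ r < s (j + 1) := ⟨j, hj, h1, h2⟩
  rw [chatIdx, dif_pos h]
  obtain ⟨-, hf1, hf2⟩ := Nat.find_spec h
  exact Fin.ext (chat_uniq hs hf1 hf2 h1 h2)
section
variable {K : ℕ} (hK : 0 < K) (s : ℕ → ℝ) (a Δ : ℝ)

noncomputable def chatSigma : ℝ → Fin K :=
  fun τ => chatIdx K hK s (Int.fract ((τ - a) / Δ))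

variable {s a Δ}

lemma chatSigma_eq (hs : Monotone s) (hs0 : s 0 = 0) (hsK : s K = 1) (hΔ : 0 < Δ)
    (j : ℕ) {k : ℕ} (hk : k < K) {τ : ℝ}
    (h1 : a + j * Δ + s k * Δ ≤ τ) (h2 : τ < a + j * Δ + s (k + 1) * Δ) :
    chatSigma hK s a Δ τ = ⟨k, hk⟩ := by
  set r : ℝ := (τ - (a + j * Δ)) / Δ with hr
  have hr1 : s k ≤ r := by rw [hr, le_div_iff₀ hΔ]; linarith
  have hr2 : r < s (k + 1) := by rw [hr, div_lt_iff₀ hΔ]; linarith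
  have hr0 : 0 ≤ r := le_trans (hs0 ▸ hs (Nat.zero_le k)) hr1
  have hrlt : r < 1 := lt_of_lt_of_le hr2 (hsK ▸ hs hk)
  have hfr : Int.fract ((τ - a) / Δ) = r := by
    have h3 : (τ - a) / Δ = r + (j : ℤ) := by
      rw [hr]; push_cast; field_simp; ring
    rw [h3, Int.fract_add_intCast, Int.fract_eq_self.2 ⟨hr0, hrlt⟩]
  rw [chatSigma, hfr]
  exact chatIdx_eq hK hs hk hr1 hr2

lemma chatSigma_preimage (hs : Monotone s) (hs0 : s 0 = 0) (hsK : s K = 1) (hΔ : 0 < Δ)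
    (k : Fin K) :
    chatSigma hK s a Δ ⁻¹' {k}
      = {τ : ℝ | Int.fract ((τ - a) / Δ) ∈ Ico (s k) (s (k + 1))} := by
  ext τ
  simp only [mem_preimage, mem_singleton_iff, mem_setOf_eq, mem_Ico]
  set r : ℝ := Int.fract ((τ - a) / Δ) with hr
  constructor
  · intro h
    have hr0 : s 0 ≤ r := hs0 ▸ Int.fract_nonneg _
    have hrK : r < s K := hsK ▸ Int.fract_lt_one _
    obtain ⟨j, hj, h1, h2⟩ := chat_exists_step s r K hr0 hrK
    have heq := chatIdx_eq hK hs hj h1 h2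
    rw [chatSigma, ← hr, heq] at h
    rw [← h]
    exact ⟨h1, h2⟩
  · rintro ⟨h1, h2⟩
    have := chatIdx_eq hK hs k.isLt h1 h2
    rw [chatSigma, ← hr, this]

lemma chatSigma_measurable (hs : Monotone s) (hs0 : s 0 = 0) (hsK : s K = 1) (hΔ : 0 < Δ) :
    Measurable (chatSigma hK s a Δ) := by
  apply measurable_to_countable'
  intro k
  rw [chatSigma_preimage hK hs hs0 hsK hΔ]
  exact ((measurable_id.sub_const a).div_const Δ).fract measurableSet_Ico
end
set_option maxHeartbeats 2000000 in
theorem chattering_lemma_existence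
    (n K : ℕ) (hK : 0 < K) (a b : ℝ) (hab : a < b)
    (c : Fin K → ℝ → EuclideanSpace ℝ (Fin n))
    (hc : ∀ k, IntegrableOn (c k) (Icc a b) volume)
    (α : Fin K → ℝ) (hα0 : ∀ k, 0 ≤ α k) (hα1 : ∑ k, α k = 1)
    (ε : ℝ) (hε : 0 < ε) :
    ∃ g : ℝ → EuclideanSpace ℝ (Fin n),
      Measurable g ∧
      (∀ᵐ t ∂(volume.restrict (Icc a b)), ∃ k : Fin K, g t = c k t) ∧
      ∀ t ∈ Icc a b,
        ‖∫ τ in a..t, (g τ - ∑ k : Fin K, α k • c k τ)‖ < ε := by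
  haveI : Nonempty (Fin K) := ⟨⟨0, hK⟩⟩
  -- measurable representatives
  have hcm : ∀ k, AEStronglyMeasurable (c k) (volume.restrict (Icc a b)) :=
    fun k => (hc k).aestronglyMeasurable
  set c' : Fin K → ℝ → EuclideanSpace ℝ (Fin n) := fun k => (hcm k).mk (c k) with hc'def
  have hc'm : ∀ k, StronglyMeasurable (c' k) := fun k => (hcm k).stronglyMeasurable_mk
  have hc'ae : ∀ k, c k =ᵐ[volume.restrict (Icc a b)] c' k := fun k => (hcm k).ae_eq_mk
  have hc'int : ∀ k, IntegrableOn (c' k) (Icc a b) volume :=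
    fun k => (IntegrableOn.congr_fun_ae (hc k) (hc'ae k))
  -- continuous approximations
  set δ : ℝ := ε / (8 * (K + 1)) with hδdef
  have hδ : 0 < δ := by positivity
  have happrox : ∀ k : Fin K, ∃ φ : ℝ → EuclideanSpace ℝ (Fin n), HasCompactSupport φ ∧
      (∫ x, ‖(Icc a b).indicator (c' k) x - φ x‖) ≤ δ ∧ Continuous φ ∧ Integrable φ volume := by
    intro k
    have hind : Integrable ((Icc a b).indicator (c' k)) volume :=
      (integrable_indicator_iff measurableSet_Icc).2 (hc'int k)
    exact hind.exists_hasCompactSupport_integral_sub_le hδ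
  choose φ hφsupp hφL1 hφcont hφint using happrox
  have hnormint : ∀ k, IntegrableOn (fun x => ‖c' k x - φ k x‖) (Icc a b) volume :=
    fun k => ((hc'int k).sub ((hφint k).integrableOn)).norm
  have hL1 : ∀ k, (∫ x in Icc a b, ‖c' k x - φ k x‖) ≤ δ := by
    intro k
    refine le_trans ?_ (hφL1 k)
    have heq : (∫ x in Icc a b, ‖c' k x - φ k x‖)
        = ∫ x in Icc a b, ‖(Icc a b).indicator (c' k) x - φ k x‖ := by
      refine setIntegral_congr_fun measurableSet_Icc fun x hx => ?_
      rw [indicator_of_mem hx]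
    rw [heq]
    refine setIntegral_le_integral ?_ (ae_of_all _ fun x => norm_nonneg _)
    exact (((integrable_indicator_iff measurableSet_Icc).2 (hc'int k)).sub (hφint k)).norm
  -- uniform bound M
  have hMk : ∀ k : Fin K, ∃ Mk : ℝ, ∀ x, ‖φ k x‖ ≤ Mk :=
    fun k => (hφsupp k).exists_bound_of_continuous (hφcont k)
  choose Mk hMk' using hMk
  set M : ℝ := 1 + ∑ k, |Mk k| with hMdef
  have hM0 : 0 < M := by positivity
  have hM : ∀ (k : Fin K) (x : ℝ), ‖φ k x‖ ≤ M := by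
    intro k x
    have h1 : ‖φ k x‖ ≤ |Mk k| := (hMk' k x).trans (le_abs_self _)
    have h2 : |Mk k| ≤ ∑ j, |Mk j| :=
      Finset.single_le_sum (fun j _ => abs_nonneg (Mk j)) (Finset.mem_univ k)
    linarith
  -- uniform continuity
  set η : ℝ := ε / (16 * (b - a)) with hηdef
  have hη : 0 < η := by have := sub_pos.2 hab; positivity
  have hUC : ∀ k : Fin K, ∃ d > 0, ∀ x y : ℝ, dist x y < d → dist (φ k x) (φ k y) < η :=
    fun k => Metric.uniformContinuous_iff.1
      ((hφcont k).uniformContinuous_of_tendsto_cocompact (hφsupp k).is_zero_at_infty) η hη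
  choose d hd0 hdlt using hUC
  set δ' : ℝ := Finset.univ.inf' Finset.univ_nonempty d with hδ'def
  have hδ'0 : 0 < δ' := (Finset.lt_inf'_iff _).2 fun k _ => hd0 k
  have hδ'le : ∀ k, δ' ≤ d k := fun k => Finset.inf'_le _ (Finset.mem_univ k)
  -- choose N and Δ
  obtain ⟨N, hN⟩ := exists_nat_gt (max ((b - a) / δ') (16 * M * (b - a) / ε))
  have hbapos : 0 < b - a := sub_pos.2 hab
  have hN0 : 0 < (N : ℝ) := by
    have h1 : (0:ℝ) < (b - a) / δ' := by positivity
    exact lt_trans (lt_of_lt_of_le h1 (le_max_left _ _)) hN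
  set Δ : ℝ := (b - a) / N with hΔdef
  have hΔ0 : 0 < Δ := by positivity
  have hΔδ' : Δ < δ' := by
    have h1 : (b - a) / δ' < N := lt_of_le_of_lt (le_max_left _ _) hN
    rw [hΔdef, div_lt_iff₀ hN0]
    rw [div_lt_iff₀ hδ'0] at h1
    nlinarith
  have hNΔ : (N : ℝ) * Δ = b - a := by
    rw [hΔdef]; field_simp
  have hΔM : 2 * M * Δ ≤ ε / 8 := by
    have h1 : 16 * M * (b - a) / ε < N := lt_of_le_of_lt (le_max_right _ _) hN
    rw [div_lt_iff₀ hε] at h1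
    have h2 : 2 * M * Δ = 2 * M * (b - a) / N := by rw [hΔdef]; ring
    rw [h2, div_le_iff₀ hN0]
    nlinarith
  -- the cumulative distribution s
  set β : ℕ → ℝ := fun i => if h : i < K then α ⟨i, h⟩ else 0 with hβdef
  have hβ0 : ∀ i, 0 ≤ β i := by
    intro i; rw [hβdef]; dsimp only; split
    · exact hα0 _
    · exact le_refl 0
  set s : ℕ → ℝ := fun m => ∑ i ∈ Finset.range m, β i with hsdef
  have hs0 : s 0 = 0 := by simp [hsdef]
  have hsmono : Monotone s := by
    apply monotone_nat_of_le_succ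
    intro m
    rw [hsdef]; dsimp only
    rw [Finset.sum_range_succ]
    linarith [hβ0 m]
  have hβα : ∀ k : Fin K, β k = α k := by
    intro k; rw [hβdef]; dsimp only; rw [dif_pos k.isLt]
  have hstep : ∀ k : Fin K, s ((k : ℕ) + 1) = s k + α k := by
    intro k
    rw [hsdef]; dsimp only
    rw [Finset.sum_range_succ, hβα k]
  have hsK : s K = 1 := by
    rw [hsdef]; dsimp only
    rw [← Fin.sum_univ_eq_sum_range β K, ← hα1]
    exact Finset.sum_congr rfl fun k _ => hβα k
  -- the selection function and the chattering control
  set σ : ℝ → Fin K := chatSigma hK s a Δ with hσdef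
  have hσm : Measurable σ := chatSigma_measurable hK hsmono hs0 hsK hΔ0
  set g : ℝ → EuclideanSpace ℝ (Fin n) := fun τ => c' (σ τ) τ with hgdef
  set G : ℝ → EuclideanSpace ℝ (Fin n) := fun τ => φ (σ τ) τ with hGdef
  set H : ℝ → EuclideanSpace ℝ (Fin n) := fun τ => ∑ k, α k • φ k τ with hHdef
  have hselm : ∀ (ψ : Fin K → ℝ → EuclideanSpace ℝ (Fin n)), (∀ k, Measurable (ψ k)) →
      Measurable (fun τ => ψ (σ τ) τ) := by
    intro ψ hψ
    have heq : (fun τ => ψ (σ τ) τ)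
        = fun τ => ∑ k : Fin K, if σ τ = k then ψ k τ else 0 := by
      funext τ
      rw [Finset.sum_ite_eq (Finset.univ) (σ τ) (fun k => ψ k τ)]
      simp
    rw [heq]
    refine Finset.measurable_sum _ fun k _ => Measurable.ite ?_ (hψ k) measurable_const
    exact hσm (MeasurableSet.singleton k)
  have hgm : Measurable g := hselm c' fun k => (hc'm k).measurable
  have hGm : Measurable G := hselm φ fun k => (hφcont k).measurable
  have hHcont : Continuous H := continuous_finset_sum _ fun k _ => by exact (hφcont k).const_smul (α k)
  have hGbd : ∀ τ, ‖G τ‖ ≤ M := fun τ => hM _ _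
  have hHbd : ∀ τ, ‖H τ‖ ≤ M := by
    intro τ
    calc ‖H τ‖ ≤ ∑ k, ‖α k • φ k τ‖ := norm_sum_le _ _
      _ = ∑ k, α k * ‖φ k τ‖ := by
          refine Finset.sum_congr rfl fun k _ => ?_
          rw [norm_smul, Real.norm_eq_abs, abs_of_nonneg (hα0 k)]
      _ ≤ ∑ k, α k * M := Finset.sum_le_sum fun k _ =>
          mul_le_mul_of_nonneg_left (hM k τ) (hα0 k)
      _ = M := by rw [← Finset.sum_mul, hα1, one_mul]
  have hGint : ∀ p q : ℝ, IntervalIntegrable G volume p q := by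
    intro p q
    rw [intervalIntegrable_iff]
    refine Integrable.mono' (g := fun _ => M) ?_ hGm.aestronglyMeasurable
      (ae_of_all _ fun τ => hGbd τ)
    refine (integrableOn_const_iff (by simp)).2 (Or.inr ?_)
    rw [Set.uIoc]
    exact measure_Ioc_lt_top
  have hGHint : ∀ p q : ℝ, IntervalIntegrable (fun τ => G τ - H τ) volume p q :=
    fun p q => (hGint p q).sub (hHcont.intervalIntegrable p q)
  refine ⟨g, hgm, ?_, ?_⟩
  · have hae : ∀ᵐ t ∂(volume.restrict (Icc a b)), ∀ k, c k t = c' k t :=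
      (ae_all_iff).2 fun k => hc'ae k
    filter_upwards [hae] with t ht
    exact ⟨σ t, (ht (σ t)).symm⟩
  intro t ht
  obtain ⟨hta, htb⟩ := ht
  have hIocsub : Ioc a t ⊆ Icc a b := fun x hx => ⟨hx.1.le, hx.2.trans htb⟩
  -- replace c by c'
  have hcongr : (∫ τ in a..t, (g τ - ∑ k : Fin K, α k • c k τ))
      = ∫ τ in a..t, (g τ - ∑ k : Fin K, α k • c' k τ) := by
    rw [intervalIntegral.integral_of_le hta, intervalIntegral.integral_of_le hta]
    have hae2 : ∀ᵐ τ ∂(volume.restrict (Ioc a t)), ∀ k, c k τ = c' k τ :=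
      ae_restrict_of_ae_restrict_of_subset hIocsub ((ae_all_iff).2 fun k => hc'ae k)
    refine integral_congr_ae (hae2.mono fun τ hτ => ?_)
    dsimp only
    rw [sub_right_inj]
    exact Finset.sum_congr rfl fun k _ => by rw [hτ k]
  rw [hcongr]
  -- integrability facts on (a, t]
  have hgint : IntegrableOn g (Ioc a t) volume := by
    refine Integrable.mono' (g := fun τ => ∑ k, ‖c' k τ‖) ?_
      (hgm.aestronglyMeasurable.restrict) (ae_of_all _ fun τ => ?_)
    · exact integrable_finset_sum _ fun k _ => (((hc'int k).mono_set hIocsub).norm)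
    · exact Finset.single_le_sum (f := fun k => ‖c' k τ‖)
        (fun k _ => norm_nonneg _) (Finset.mem_univ (σ τ))
  have hc'intt : ∀ k : Fin K, IntegrableOn (c' k) (Ioc a t) volume :=
    fun k => (hc'int k).mono_set hIocsub
  have hgGint : IntervalIntegrable (fun τ => g τ - G τ) volume a t := by
    rw [intervalIntegrable_iff, uIoc_of_le hta]
    exact hgint.sub ((intervalIntegrable_iff_integrableOn_Ioc_of_le hta).1 (hGint a t))
  have hHCint : IntervalIntegrable (fun τ => H τ - ∑ k : Fin K, α k • c' k τ) volume a t := by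
    rw [intervalIntegrable_iff, uIoc_of_le hta]
    exact (hHcont.integrableOn_Ioc).sub
      (integrable_finset_sum _ fun k _ => (hc'intt k).smul (α k))
  -- split the integral into three pieces
  have hsplit : (∫ τ in a..t, (g τ - ∑ k : Fin K, α k • c' k τ))
      = (∫ τ in a..t, (g τ - G τ)) + ((∫ τ in a..t, (G τ - H τ))
        + ∫ τ in a..t, (H τ - ∑ k : Fin K, α k • c' k τ)) := by
    rw [← intervalIntegral.integral_add (hGHint a t) hHCint,
      ← intervalIntegral.integral_add hgGint ((hGHint a t).add hHCint)]
    congr 1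
    funext τ
    abel
  rw [hsplit]
  -- Term A
  have hTermA : ‖∫ τ in a..t, (g τ - G τ)‖ ≤ K * δ := by
    rw [intervalIntegral.integral_of_le hta]
    have hdiffIoc : ∀ k : Fin K, IntegrableOn (fun τ => ‖c' k τ - φ k τ‖) (Ioc a t) volume :=
      fun k => (hnormint k).mono_set hIocsub
    calc ‖∫ τ in Ioc a t, (g τ - G τ)‖ ≤ ∫ τ in Ioc a t, ‖g τ - G τ‖ :=
        norm_integral_le_integral_norm _
      _ ≤ ∫ τ in Ioc a t, ∑ k, ‖c' k τ - φ k τ‖ := by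
          refine setIntegral_mono_on
            ((hgint.sub ((intervalIntegrable_iff_integrableOn_Ioc_of_le hta).1 (hGint a t))).norm)
            (integrable_finset_sum _ fun k _ => hdiffIoc k) measurableSet_Ioc fun τ _ => ?_
          exact Finset.single_le_sum (f := fun k => ‖c' k τ - φ k τ‖)
            (fun k _ => norm_nonneg _) (Finset.mem_univ (σ τ))
      _ ≤ ∫ τ in Icc a b, ∑ k, ‖c' k τ - φ k τ‖ := by
          refine setIntegral_mono_set (integrable_finset_sum _ fun k _ => hnormint k)
            (ae_of_all _ fun τ => Finset.sum_nonneg fun k _ => norm_nonneg _)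
            (HasSubset.Subset.eventuallyLE hIocsub)
      _ = ∑ k, ∫ τ in Icc a b, ‖c' k τ - φ k τ‖ := integral_finset_sum _ fun k _ => hnormint k
      _ ≤ ∑ _k : Fin K, δ := Finset.sum_le_sum fun k _ => hL1 k
      _ = K * δ := by
          rw [Finset.sum_const, Finset.card_univ, Fintype.card_fin, nsmul_eq_mul]
  -- Term C
  have hTermC : ‖∫ τ in a..t, (H τ - ∑ k : Fin K, α k • c' k τ)‖ ≤ δ := by
    rw [intervalIntegral.integral_of_le hta]
    have hpt : ∀ τ, ‖H τ - ∑ k : Fin K, α k • c' k τ‖ ≤ ∑ k, α k * ‖c' k τ - φ k τ‖ := by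
      intro τ
      have heq : H τ - ∑ k : Fin K, α k • c' k τ = ∑ k : Fin K, α k • (φ k τ - c' k τ) := by
        rw [hHdef]
        dsimp only
        rw [← Finset.sum_sub_distrib]
        exact Finset.sum_congr rfl fun k _ => (smul_sub _ _ _).symm
      rw [heq]
      calc ‖∑ k : Fin K, α k • (φ k τ - c' k τ)‖ ≤ ∑ k, ‖α k • (φ k τ - c' k τ)‖ :=
          norm_sum_le _ _
        _ = ∑ k, α k * ‖c' k τ - φ k τ‖ := Finset.sum_congr rfl fun k _ => by
            rw [norm_smul, Real.norm_eq_abs, abs_of_nonneg (hα0 k), norm_sub_rev]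
    calc ‖∫ τ in Ioc a t, (H τ - ∑ k : Fin K, α k • c' k τ)‖
        ≤ ∫ τ in Ioc a t, ‖H τ - ∑ k : Fin K, α k • c' k τ‖ := norm_integral_le_integral_norm _
      _ ≤ ∫ τ in Ioc a t, ∑ k, α k * ‖c' k τ - φ k τ‖ :=
          setIntegral_mono_on
            (((intervalIntegrable_iff_integrableOn_Ioc_of_le hta).1 hHCint).norm)
            (integrable_finset_sum _ fun k _ => ((hnormint k).mono_set hIocsub).const_mul _)
            measurableSet_Ioc (fun τ _ => hpt τ)
      _ ≤ ∫ τ in Icc a b, ∑ k, α k * ‖c' k τ - φ k τ‖ :=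
          setIntegral_mono_set (integrable_finset_sum _ fun k _ => (hnormint k).const_mul _)
            (ae_of_all _ fun τ => Finset.sum_nonneg fun k _ =>
              mul_nonneg (hα0 k) (norm_nonneg _))
            (HasSubset.Subset.eventuallyLE hIocsub)
      _ = ∑ k, α k * ∫ τ in Icc a b, ‖c' k τ - φ k τ‖ := by
          rw [integral_finset_sum _ fun k _ => (hnormint k).const_mul _]
          exact Finset.sum_congr rfl fun k _ => integral_const_mul _ _
      _ ≤ ∑ k, α k * δ := Finset.sum_le_sum fun k _ =>
          mul_le_mul_of_nonneg_left (hL1 k) (hα0 k)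
      _ = δ := by rw [← Finset.sum_mul, hα1, one_mul]
  -- Term B
  have hTermB : ‖∫ τ in a..t, (G τ - H τ)‖ ≤ ε / 8 + ε / 8 := by
    set u : ℕ → ℝ := fun j => a + j * Δ with hudef
    have hu0 : u 0 = a := by simp [hudef]
    set i : ℕ := ⌊(t - a) / Δ⌋₊ with hidef
    have hta' : 0 ≤ (t - a) / Δ := div_nonneg (by linarith) hΔ0.le
    have hfl : (i : ℝ) ≤ (t - a) / Δ := Nat.floor_le hta'
    have hfl2 : (t - a) / Δ < (i : ℝ) + 1 := Nat.lt_floor_add_one _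
    have hui_le : u i ≤ t := by
      rw [hudef]
      dsimp only
      rw [le_div_iff₀ hΔ0] at hfl
      linarith
    have htui : t - u i ≤ Δ := by
      rw [hudef]
      dsimp only
      rw [div_lt_iff₀ hΔ0] at hfl2
      linarith
    have hiN : (i : ℝ) ≤ (N : ℝ) := by
      have h1 : (t - a) / Δ ≤ N := by
        rw [div_le_iff₀ hΔ0]
        nlinarith [hNΔ]
      exact hfl.trans h1
    have hper : ∀ j : ℕ, ‖∫ τ in u j..u (j + 1), (G τ - H τ)‖ ≤ 2 * η * Δ := by
      intro j
      set v : ℕ → ℝ := fun k => u j + s k * Δ with hvdef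
      have hv0 : v 0 = u j := by simp [hvdef, hs0]
      have hvK : v K = u (j + 1) := by
        rw [hvdef, hudef]
        dsimp only
        rw [hsK]
        push_cast
        ring
      have hvmono : Monotone v := by
        intro k1 k2 h
        rw [hvdef]
        dsimp only
        have := hsmono h
        nlinarith
      have hsnn : ∀ k : ℕ, 0 ≤ s k := fun k => hs0 ▸ hsmono (Nat.zero_le k)
      have hsle1 : ∀ k : ℕ, k ≤ K → s k ≤ 1 := fun k hk => hsK ▸ hsmono hk
      -- on each piece, G agrees a.e. with φ k
      have hGeq : ∀ k : Fin K,
          (∫ τ in v k..v ((k : ℕ) + 1), G τ) = ∫ τ in v k..v ((k : ℕ) + 1), φ k τ := by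
        intro k
        apply intervalIntegral.integral_congr_ae
        have hne : ∀ᵐ τ : ℝ, τ ≠ v ((k : ℕ) + 1) := by
          rw [ae_iff]
          have heq : {τ : ℝ | ¬τ ≠ v ((k : ℕ) + 1)} = {v ((k : ℕ) + 1)} := by
            ext τ; simp
          rw [heq]
          exact measure_singleton _
        filter_upwards [hne] with τ hτne hτmem
        rw [uIoc_of_le (hvmono (Nat.le_succ (k : ℕ)))] at hτmem
        have hlt : τ < v ((k : ℕ) + 1) := lt_of_le_of_ne hτmem.2 hτne
        have h1 : a + (j : ℝ) * Δ + s (k : ℕ) * Δ ≤ τ := hτmem.1.le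
        have h2 : τ < a + (j : ℝ) * Δ + s ((k : ℕ) + 1) * Δ := hlt
        have hσ : σ τ = k := by
          have heq2 := chatSigma_eq hK hsmono hs0 hsK hΔ0 j k.isLt h1 h2
          rw [hσdef, heq2]
        rw [hGdef]
        dsimp only
        rw [hσ]
      have hφiint : ∀ (k : Fin K) (p q : ℝ), IntervalIntegrable (φ k) volume p q :=
        fun k p q => (hφcont k).intervalIntegrable p q
      have hGsplit : (∫ τ in u j..u (j + 1), G τ)
          = ∑ k : Fin K, ∫ τ in v (k : ℕ)..v ((k : ℕ) + 1), φ k τ := by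
        rw [← hv0, ← hvK,
          ← intervalIntegral.sum_integral_adjacent_intervals
            (fun k (_ : k < K) => hGint (v k) (v (k + 1))),
          ← Fin.sum_univ_eq_sum_range (fun k => ∫ τ in v k..v (k + 1), G τ) K]
        exact Finset.sum_congr rfl fun k _ => hGeq k
      have hHsplit : (∫ τ in u j..u (j + 1), H τ)
          = ∑ k : Fin K, α k • ∫ τ in u j..u (j + 1), φ k τ := by
        rw [hHdef]
        dsimp only
        rw [intervalIntegral.integral_finset_sum (f := fun k τ => α k • φ k τ)
          (fun k _ => by exact ((hφcont k).const_smul (α k)).intervalIntegrable _ _)]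
        exact Finset.sum_congr rfl fun k _ => intervalIntegral.integral_smul (α k) (φ k)
      have hdiffeq : (∫ τ in u j..u (j + 1), (G τ - H τ))
          = ∑ k : Fin K, ((∫ τ in v (k : ℕ)..v ((k : ℕ) + 1), φ k τ)
            - α k • ∫ τ in u j..u (j + 1), φ k τ) := by
        rw [intervalIntegral.integral_sub (hGint _ _) (hHcont.intervalIntegrable _ _),
          hGsplit, hHsplit, ← Finset.sum_sub_distrib]
      rw [hdiffeq]
      have hterm : ∀ k : Fin K,
          ‖(∫ τ in v (k : ℕ)..v ((k : ℕ) + 1), φ k τ)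
            - α k • ∫ τ in u j..u (j + 1), φ k τ‖ ≤ 2 * η * Δ * α k := by
        intro k
        set w := φ k (u j) with hwdef
        have hvk1 : v ((k : ℕ) + 1) - v (k : ℕ) = α k * Δ := by
          rw [hvdef]
          dsimp only
          rw [hstep k]
          ring
        have huj1 : u (j + 1) - u j = Δ := by
          rw [hudef]
          dsimp only
          push_cast
          ring
        have hclose : ∀ x : ℝ, u j ≤ x → x ≤ u j + Δ → ‖φ k x - w‖ ≤ η := by
          intro x hx1 hx2
          have hd : dist x (u j) < d k := by
            rw [Real.dist_eq, abs_of_nonneg (by linarith)]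
            calc x - u j ≤ Δ := by linarith
              _ < δ' := hΔδ'
              _ ≤ d k := hδ'le k
          have := hdlt k x (u j) hd
          rw [dist_eq_norm] at this
          exact this.le
        have hvlow : u j ≤ v (k : ℕ) := by
          rw [hvdef]
          dsimp only
          nlinarith [hsnn (k : ℕ), hΔ0.le]
        have hvhigh : v ((k : ℕ) + 1) ≤ u j + Δ := by
          rw [hvdef]
          dsimp only
          have hh := hsle1 ((k : ℕ) + 1) k.isLt
          nlinarith [hΔ0.le]
        have e1 : ‖∫ τ in v (k : ℕ)..v ((k : ℕ) + 1), (φ k τ - w)‖ ≤ η * (α k * Δ) := by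
          have hb : ∀ x ∈ uIoc (v (k : ℕ)) (v ((k : ℕ) + 1)), ‖φ k x - w‖ ≤ η := by
            intro x hx
            rw [uIoc_of_le (hvmono (Nat.le_succ (k : ℕ)))] at hx
            exact hclose x (hvlow.trans hx.1.le) (hx.2.trans hvhigh)
          have h2 := intervalIntegral.norm_integral_le_of_norm_le_const hb
          have habs : |v ((k : ℕ) + 1) - v (k : ℕ)| = α k * Δ := by
            rw [hvk1, abs_of_nonneg (by nlinarith [hα0 k, hΔ0.le])]
          rw [habs] at h2
          linarith
        have e2 : ‖∫ τ in u j..u (j + 1), (φ k τ - w)‖ ≤ η * Δ := by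
          have hujle : u j ≤ u (j + 1) := by linarith
          have hb : ∀ x ∈ uIoc (u j) (u (j + 1)), ‖φ k x - w‖ ≤ η := by
            intro x hx
            rw [uIoc_of_le hujle] at hx
            exact hclose x hx.1.le (by linarith [hx.2])
          have h2 := intervalIntegral.norm_integral_le_of_norm_le_const hb
          have habs : |u (j + 1) - u j| = Δ := by rw [huj1, abs_of_nonneg hΔ0.le]
          rw [habs] at h2
          linarith
        have hIv : (∫ τ in v (k : ℕ)..v ((k : ℕ) + 1), φ k τ)
            = (∫ τ in v (k : ℕ)..v ((k : ℕ) + 1), (φ k τ - w)) + (α k * Δ) • w := by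
          rw [intervalIntegral.integral_sub (hφiint k _ _) intervalIntegrable_const,
            intervalIntegral.integral_const, hvk1]
          abel
        have hIu : α k • (∫ τ in u j..u (j + 1), φ k τ)
            = α k • (∫ τ in u j..u (j + 1), (φ k τ - w)) + (α k * Δ) • w := by
          rw [intervalIntegral.integral_sub (hφiint k _ _) intervalIntegrable_const,
            intervalIntegral.integral_const, huj1, smul_sub, smul_smul]
          abel
        rw [hIv, hIu]
        have hsimp : ∀ X Y Z : EuclideanSpace ℝ (Fin n), (X + Z) - (Y + Z) = X - Y := by
          intro X Y Z
          abel
        rw [hsimp]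
        have hY : ‖α k • ∫ τ in u j..u (j + 1), (φ k τ - w)‖ ≤ α k * (η * Δ) := by
          rw [norm_smul, Real.norm_eq_abs, abs_of_nonneg (hα0 k)]
          exact mul_le_mul_of_nonneg_left e2 (hα0 k)
        calc ‖(∫ τ in v (k : ℕ)..v ((k : ℕ) + 1), (φ k τ - w))
              - α k • ∫ τ in u j..u (j + 1), (φ k τ - w)‖
            ≤ ‖∫ τ in v (k : ℕ)..v ((k : ℕ) + 1), (φ k τ - w)‖
              + ‖α k • ∫ τ in u j..u (j + 1), (φ k τ - w)‖ := norm_sub_le _ _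
          _ ≤ η * (α k * Δ) + α k * (η * Δ) := add_le_add e1 hY
          _ = 2 * η * Δ * α k := by ring
      calc ‖∑ k : Fin K, ((∫ τ in v (k : ℕ)..v ((k : ℕ) + 1), φ k τ)
            - α k • ∫ τ in u j..u (j + 1), φ k τ)‖
          ≤ ∑ k : Fin K, ‖(∫ τ in v (k : ℕ)..v ((k : ℕ) + 1), φ k τ)
            - α k • ∫ τ in u j..u (j + 1), φ k τ‖ := norm_sum_le _ _
        _ ≤ ∑ k : Fin K, 2 * η * Δ * α k := Finset.sum_le_sum fun k _ => hterm k
        _ = 2 * η * Δ := by rw [← Finset.mul_sum, hα1, mul_one]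
    have hsplit2 : (∫ τ in a..t, (G τ - H τ))
        = (∑ j ∈ Finset.range i, ∫ τ in u j..u (j + 1), (G τ - H τ))
          + ∫ τ in u i..t, (G τ - H τ) := by
      rw [intervalIntegral.sum_integral_adjacent_intervals fun j _ => hGHint (u j) (u (j + 1)),
        hu0, intervalIntegral.integral_add_adjacent_intervals (hGHint a (u i)) (hGHint (u i) t)]
    rw [hsplit2]
    have hpartial : ‖∫ τ in u i..t, (G τ - H τ)‖ ≤ ε / 8 := by
      have hb : ∀ x ∈ uIoc (u i) t, ‖G x - H x‖ ≤ 2 * M := fun x _ =>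
        (norm_sub_le _ _).trans (by linarith [hGbd x, hHbd x])
      have h2 := intervalIntegral.norm_integral_le_of_norm_le_const hb
      have habs : |t - u i| ≤ Δ := by
        rw [abs_of_nonneg (sub_nonneg.2 hui_le)]
        exact htui
      calc ‖∫ τ in u i..t, (G τ - H τ)‖ ≤ 2 * M * |t - u i| := h2
        _ ≤ 2 * M * Δ := by nlinarith
        _ ≤ ε / 8 := hΔM
    have hsum : ‖∑ j ∈ Finset.range i, ∫ τ in u j..u (j + 1), (G τ - H τ)‖ ≤ ε / 8 := by
      calc ‖∑ j ∈ Finset.range i, ∫ τ in u j..u (j + 1), (G τ - H τ)‖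
          ≤ ∑ j ∈ Finset.range i, ‖∫ τ in u j..u (j + 1), (G τ - H τ)‖ := norm_sum_le _ _
        _ ≤ ∑ _j ∈ Finset.range i, 2 * η * Δ := Finset.sum_le_sum fun j _ => hper j
        _ = (i : ℝ) * (2 * η * Δ) := by
            rw [Finset.sum_const, Finset.card_range, nsmul_eq_mul]
        _ ≤ (N : ℝ) * (2 * η * Δ) := by
            have : (0:ℝ) ≤ 2 * η * Δ := by positivity
            exact mul_le_mul_of_nonneg_right hiN this
        _ = 2 * η * (b - a) := by rw [← hNΔ]; ring
        _ = ε / 8 := by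
            rw [hηdef]
            field_simp
            ring
    calc ‖(∑ j ∈ Finset.range i, ∫ τ in u j..u (j + 1), (G τ - H τ))
          + ∫ τ in u i..t, (G τ - H τ)‖
        ≤ ‖∑ j ∈ Finset.range i, ∫ τ in u j..u (j + 1), (G τ - H τ)‖
          + ‖∫ τ in u i..t, (G τ - H τ)‖ := norm_add_le _ _
      _ ≤ ε / 8 + ε / 8 := add_le_add hsum hpartial
  calc ‖(∫ τ in a..t, (g τ - G τ)) + ((∫ τ in a..t, (G τ - H τ))
        + ∫ τ in a..t, (H τ - ∑ k : Fin K, α k • c' k τ))‖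
      ≤ ‖∫ τ in a..t, (g τ - G τ)‖ + (‖∫ τ in a..t, (G τ - H τ)‖
        + ‖∫ τ in a..t, (H τ - ∑ k : Fin K, α k • c' k τ)‖) :=
        (norm_add_le _ _).trans (by gcongr; exact norm_add_le _ _)
    _ ≤ K * δ + ((ε / 8 + ε / 8) + δ) := by gcongr
    _ < ε := by
        rw [hδdef]
        have hK1 : (0:ℝ) < K + 1 := by positivity
        have : (K : ℝ) * (ε / (8 * (K + 1))) + ε / (8 * (K + 1)) = ε / 8 := by
          field_simp
        nlinarith [this]
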